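/- arXiv:2106.02243 — 2 statements merged into one kernel-verified Lean document; each statement's English description precedes it below -/
import Mathlib

section
/- Let M, K be positive integers, let g : Fin M → ℂ, let h : Fin K → Fin M → ℂ, and let P > 0. Then the infimum, over all b : Fin K → Fin M → ℂ satisfying ∑_{m} |b k m|² ≤ P for every k, of ∑_{k} ( ∑_{m} Re(conj(g m) · h k m · b k m) − 1 )², equals the infimum, over all β : Fin K → Fin M → ℝ with β k m ≥ 0 and ∑_{m} (β k m)² ≤ P for every k, of ∑_{k} ( ∑_{m} |g m| · |h k m| · β k m − 1 )². -/
open BigOperators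

/-- Per-term construction: for any complex `c` and nonnegative real `β`, there is
a complex `b` with `|b| = β` and `(c * b).re = |c| * β`. -/
lemma phase_align (c : ℂ) (β : ℝ) (hβ : 0 ≤ β) :
    ∃ b : ℂ, ‖b‖ = β ∧ (c * b).re = ‖c‖ * β := by
  by_cases hc : c = 0
  · exact ⟨(β : ℂ), by simpa using hβ, by simp [hc]⟩
  · refine ⟨(β : ℝ) * (starRingEnd ℂ) c / (‖c‖ : ℂ), ?_, ?_⟩
    · have habs : ‖c‖ ≠ 0 := by simpa using hc
      simp [norm_mul, norm_div, Complex.norm_conj, abs_of_nonneg hβ,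
        Complex.norm_real, abs_of_nonneg (norm_nonneg c)]
      field_simp
    · have habs : (‖c‖ : ℝ) ≠ 0 := by simpa using hc
      have : c * ((β : ℂ) * (starRingEnd ℂ) c / (‖c‖ : ℂ))
          = ((β * Complex.normSq c / ‖c‖ : ℝ) : ℂ) := by
        rw [show c * ((β : ℂ) * (starRingEnd ℂ) c / (‖c‖ : ℂ))
            = ((β : ℂ) * (c * (starRingEnd ℂ) c)) / (‖c‖ : ℂ) from by ring,
          Complex.mul_conj]
        push_cast
        ring
      rw [this, Complex.ofReal_re]
      rw [← Complex.sq_norm]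
      field_simp

/-- Section IV reduction: the optimal value of the Tx design problem depends only
on the moduli. The infimum over complex Tx scaling factors `b` of
`∑ₖ (∑ₘ Re(conj(gₘ) h_{km} b_{km}) - 1)²` under the per-sensor power constraint
equals the infimum of `∑ₖ (∑ₘ |gₘ||h_{km}| β_{km} - 1)²` over nonnegative real
amplitudes `β` under the same power constraint. -/
theorem stmt_10 (M K : ℕ) (hM : 0 < M) (hK : 0 < K)
    (g : Fin M → ℂ) (h : Fin K → Fin M → ℂ) (P : ℝ) (hP : 0 < P) :
    sInf {v : ℝ | ∃ b : Fin K → Fin M → ℂ,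
        (∀ k, ∑ m, ‖b k m‖ ^ 2 ≤ P) ∧
        v = ∑ k, ((∑ m, ((starRingEnd ℂ) (g m) * h k m * b k m).re) - 1) ^ 2}
    = sInf {v : ℝ | ∃ β : Fin K → Fin M → ℝ,
        (∀ k m, 0 ≤ β k m) ∧ (∀ k, ∑ m, (β k m) ^ 2 ≤ P) ∧
        v = ∑ k, ((∑ m, ‖g m‖ * ‖h k m‖ * β k m) - 1) ^ 2} := by
  set A := {v : ℝ | ∃ b : Fin K → Fin M → ℂ,
        (∀ k, ∑ m, ‖b k m‖ ^ 2 ≤ P) ∧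
        v = ∑ k, ((∑ m, ((starRingEnd ℂ) (g m) * h k m * b k m).re) - 1) ^ 2} with hA
  set B := {v : ℝ | ∃ β : Fin K → Fin M → ℝ,
        (∀ k m, 0 ≤ β k m) ∧ (∀ k, ∑ m, (β k m) ^ 2 ≤ P) ∧
        v = ∑ k, ((∑ m, ‖g m‖ * ‖h k m‖ * β k m) - 1) ^ 2} with hB
  have hAne : A.Nonempty := by
    refine ⟨∑ k : Fin K, ((∑ m : Fin M, ((starRingEnd ℂ) (g m) * h k m * (0:ℂ)).re) - 1) ^ 2,
      fun _ _ => 0, fun k => ?_, rfl⟩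
    simpa using hP.le
  have hBne : B.Nonempty := by
    refine ⟨∑ k : Fin K, ((∑ m : Fin M, ‖g m‖ * ‖h k m‖ * (0:ℝ)) - 1) ^ 2,
      fun _ _ => 0, fun _ _ => le_refl 0, fun k => ?_, rfl⟩
    simpa using hP.le
  have hAbdd : BddBelow A := by
    refine ⟨0, fun v hv => ?_⟩
    obtain ⟨b, _, rfl⟩ := hv
    exact Finset.sum_nonneg fun k _ => sq_nonneg _
  have hBbdd : BddBelow B := by
    refine ⟨0, fun v hv => ?_⟩
    obtain ⟨β, _, _, rfl⟩ := hv
    exact Finset.sum_nonneg fun k _ => sq_nonneg _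
  apply le_antisymm
  · -- sInf A ≤ sInf B : any value in B is attained in A
    apply le_csInf hBne
    rintro v ⟨β, hβ0, hβP, rfl⟩
    apply csInf_le hAbdd
    -- build b by phase alignment
    choose b hb1 hb2 using fun k m => phase_align ((starRingEnd ℂ) (g m) * h k m) (β k m) (hβ0 k m)
    refine ⟨b, fun k => ?_, ?_⟩
    · calc ∑ m, ‖b k m‖ ^ 2 = ∑ m, (β k m) ^ 2 := by
            exact Finset.sum_congr rfl fun m _ => by rw [hb1]
        _ ≤ P := hβP k
    · refine Finset.sum_congr rfl fun k _ => ?_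
      congr 1
      refine congrArg (· - 1) (Finset.sum_congr rfl fun m _ => ?_)
      rw [hb2 k m, norm_mul, Complex.norm_conj]
  · -- sInf B ≤ sInf A
    apply le_csInf hAne
    rintro v ⟨b, hbP, rfl⟩
    set s : Fin K → ℝ := fun k => ∑ m, ((starRingEnd ℂ) (g m) * h k m * b k m).re with hs
    set t : Fin K → ℝ := fun k => ∑ m, ‖g m‖ * ‖h k m‖ * ‖b k m‖ with ht
    have ht0 : ∀ k, 0 ≤ t k := fun k => Finset.sum_nonneg fun m _ =>
      mul_nonneg (mul_nonneg (norm_nonneg _) (norm_nonneg _)) (norm_nonneg _)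
    have hst : ∀ k, |s k| ≤ t k := by
      intro k
      calc |s k| ≤ ∑ m, |((starRingEnd ℂ) (g m) * h k m * b k m).re| :=
            Finset.abs_sum_le_sum_abs _ _
        _ ≤ t k := by
            refine Finset.sum_le_sum fun m _ => ?_
            calc |((starRingEnd ℂ) (g m) * h k m * b k m).re|
                ≤ ‖(starRingEnd ℂ) (g m) * h k m * b k m‖ :=
                  Complex.abs_re_le_norm _
              _ = ‖g m‖ * ‖h k m‖ * ‖b k m‖ := by
                  rw [norm_mul, norm_mul, Complex.norm_conj]
    set q : Fin K → ℝ := fun k => if t k = 0 then 0 else max (s k) 0 / t k with hq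
    have hq0 : ∀ k, 0 ≤ q k := by
      intro k
      by_cases hk : t k = 0 <;> simp [hq, hk]
      exact div_nonneg (le_max_right _ _) (ht0 k)
    have hq1 : ∀ k, q k ≤ 1 := by
      intro k
      by_cases hk : t k = 0
      · simp [hq, hk]
      · have htpos : 0 < t k := lt_of_le_of_ne (ht0 k) (Ne.symm hk)
        have hmax : max (s k) 0 ≤ t k := max_le ((abs_le.mp (hst k)).2) (ht0 k)
        simp only [hq, hk, if_false]
        exact div_le_one_of_le₀ hmax (ht0 k)
    have hqt : ∀ k, q k * t k = max (s k) 0 := by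
      intro k
      by_cases hk : t k = 0
      · have : |s k| ≤ 0 := hk ▸ hst k
        have hs0 : s k = 0 := abs_nonpos_iff.mp this
        simp [hq, hk, hs0]
      · simp only [hq, hk, if_false]
        field_simp
    set β : Fin K → Fin M → ℝ := fun k m => q k * ‖b k m‖ with hβ
    have key : ∀ k, ∑ m, ‖g m‖ * ‖h k m‖ * β k m = max (s k) 0 := by
      intro k
      rw [← hqt k, ht]
      rw [Finset.mul_sum]
      exact Finset.sum_congr rfl fun m _ => by simp [hβ]; ring
    refine csInf_le_of_le hBbdd ⟨β, ?_, ?_, rfl⟩ ?_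
    · exact fun k m => mul_nonneg (hq0 k) (norm_nonneg _)
    · intro k
      calc ∑ m, (β k m) ^ 2 ≤ ∑ m, ‖b k m‖ ^ 2 := by
            refine Finset.sum_le_sum fun m _ => ?_
            have : (β k m) ^ 2 = q k ^ 2 * ‖b k m‖ ^ 2 := by simp [hβ]; ring
            rw [this]
            have hq2 : q k ^ 2 ≤ 1 := by nlinarith [hq0 k, hq1 k]
            exact mul_le_of_le_one_left (sq_nonneg _) hq2
        _ ≤ P := hbP k
    · refine Finset.sum_le_sum fun k _ => ?_
      rw [key k]
      rcases le_or_gt 0 (s k) with hsk | hsk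
      · rw [max_eq_left hsk]
      · rw [max_eq_right hsk.le]
        nlinarith
end

section
/- Let M, K be positive integers, let h : Fin K → Fin M → ℂ, let P > 0 and σ² > 0. Define V_RNO as the infimum over g : Fin M → ℂ and b : Fin K → Fin M → ℂ with ∑_m |b k m|² ≤ P for every k, of ∑_k ( ∑_m Re(conj(g m) · h k m · b k m) − 1 )² + (σ²/2) ∑_m |g m|²; and define V_CNO as the infimum over g̃ : Fin M → ℂ and b : Fin K → Fin M → ℂ with ∑_m |b k m|² ≤ P for every k, of ∑_k | ∑_m g̃ m · h k m · b k m − 1 |² + σ² ∑_m |g̃ m|². Then V_RNO ≤ V_CNO. -/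
open BigOperators

/-- Section IV-A: the optimal computation MSE of the real-number-operation
fusion center is no larger than that of the complex-number-operation one. -/
theorem stmt_11 (M K : ℕ) (hM : 0 < M) (hK : 0 < K)
    (h : Fin K → Fin M → ℂ) (P σsq : ℝ) (hP : 0 < P) (hσ : 0 < σsq) :
    sInf {v : ℝ | ∃ g : Fin M → ℂ, ∃ b : Fin K → Fin M → ℂ,
        (∀ k, ∑ m, ‖b k m‖ ^ 2 ≤ P) ∧
        v = (∑ k, ((∑ m, ((starRingEnd ℂ) (g m) * h k m * b k m).re) - 1) ^ 2)
            + (σsq / 2) * ∑ m, ‖g m‖ ^ 2}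
    ≤ sInf {v : ℝ | ∃ gt : Fin M → ℂ, ∃ b : Fin K → Fin M → ℂ,
        (∀ k, ∑ m, ‖b k m‖ ^ 2 ≤ P) ∧
        v = (∑ k, ‖(∑ m, gt m * h k m * b k m) - 1‖ ^ 2)
            + σsq * ∑ m, ‖gt m‖ ^ 2} := by
  set A := {v : ℝ | ∃ g : Fin M → ℂ, ∃ b : Fin K → Fin M → ℂ,
        (∀ k, ∑ m, ‖b k m‖ ^ 2 ≤ P) ∧
        v = (∑ k, ((∑ m, ((starRingEnd ℂ) (g m) * h k m * b k m).re) - 1) ^ 2)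
            + (σsq / 2) * ∑ m, ‖g m‖ ^ 2}
  have hbdd : BddBelow A := by
    refine ⟨0, fun v hv => ?_⟩
    obtain ⟨g, b, _, rfl⟩ := hv
    have h1 : (0:ℝ) ≤ ∑ k, ((∑ m, ((starRingEnd ℂ) (g m) * h k m * b k m).re) - 1) ^ 2 :=
      Finset.sum_nonneg fun _ _ => sq_nonneg _
    have h2 : (0:ℝ) ≤ (σsq / 2) * ∑ m, ‖g m‖ ^ 2 :=
      mul_nonneg (by linarith) (Finset.sum_nonneg fun _ _ => sq_nonneg _)
    linarith
  have hBne : {v : ℝ | ∃ gt : Fin M → ℂ, ∃ b : Fin K → Fin M → ℂ,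
        (∀ k, ∑ m, ‖b k m‖ ^ 2 ≤ P) ∧
        v = (∑ k, ‖(∑ m, gt m * h k m * b k m) - 1‖ ^ 2)
            + σsq * ∑ m, ‖gt m‖ ^ 2}.Nonempty := by
    refine ⟨(∑ k : Fin K, ‖(∑ m : Fin M, (0:ℂ) * h k m * 0) - 1‖ ^ 2)
        + σsq * ∑ m : Fin M, ‖(0:ℂ)‖ ^ 2, 0, 0, fun k => ?_, rfl⟩
    simp [hP.le]
  refine le_csInf hBne fun v hv => ?_
  obtain ⟨gt, b, hb, rfl⟩ := hv
  refine le_trans (csInf_le hbdd ⟨fun m => (starRingEnd ℂ) (gt m), b, hb, rfl⟩) ?_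
  gcongr ?_ + ?_
  · refine Finset.sum_le_sum fun k _ => ?_
    have hre : (∑ m, ((starRingEnd ℂ) ((starRingEnd ℂ) (gt m)) * h k m * b k m).re)
        = ((∑ m, gt m * h k m * b k m) - 1).re + 1 := by
      simp [Complex.sub_re, Complex.re_sum]
    rw [hre]
    have := Complex.sq_norm ((∑ m, gt m * h k m * b k m) - 1)
    rw [Complex.normSq_apply] at this
    nlinarith [sq_nonneg ((∑ m, gt m * h k m * b k m) - 1).im]
  · have hs : (0:ℝ) ≤ ∑ m, ‖(starRingEnd ℂ) (gt m)‖ ^ 2 :=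
      Finset.sum_nonneg fun _ _ => sq_nonneg _
    have heq : ∑ m, ‖(starRingEnd ℂ) (gt m)‖ ^ 2
        = ∑ m, ‖gt m‖ ^ 2 := by simp
    rw [heq]
    have : (0:ℝ) ≤ ∑ m, ‖gt m‖ ^ 2 :=
      Finset.sum_nonneg fun _ _ => sq_nonneg _
    nlinarith
end
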